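/- Neighbour collision criterion for isotonic regression: the optimal isotonic fit x* of y satisfies x*_i = x*_{i+1} if and only if max_{j ≤ i} avg(y_{j:i}) ≥ min_{j ≥ i+1} avg(y_{i+1:j}). -/

import Mathlib

private lemma pert_ineq {d : ℕ} (y x : Fin d → ℝ)
    (hmin : ∀ v : Fin d → ℝ, Monotone v → ∑ i, (x i - y i)^2 ≤ ∑ i, (v i - y i)^2)
    (S : Finset (Fin d)) (t : ℝ)
    (hm : Monotone fun k => x k + if k ∈ S then t else 0) :
    0 ≤ 2*t*(∑ k ∈ S, (x k - y k)) + t^2 * S.card := by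
  have h := hmin _ hm
  have e : ∀ i : Fin d, ((x i + if i ∈ S then t else 0) - y i)^2
      = (x i - y i)^2 + (if i ∈ S then 2*t*(x i - y i) + t^2 else 0) := by
    intro i; split <;> ring
  simp only [e, Finset.sum_add_distrib] at h
  rw [Finset.sum_ite_mem, Finset.univ_inter, Finset.sum_add_distrib,
    Finset.sum_const, ← Finset.mul_sum] at h
  simp only [nsmul_eq_mul] at h
  linarith

private lemma pos_of_aux (s c T : ℝ) (hc : 0 ≤ c) (hT : 0 < T)
    (h : ∀ t : ℝ, 0 < t → t ≤ T → 0 ≤ 2*t*s + t^2*c) : 0 ≤ s := by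
  by_contra hs
  push_neg at hs
  have hc1 : (0:ℝ) < c + 1 := by linarith
  have hts : 0 < -s/(c+1) := div_pos (by linarith) hc1
  set t := min T (-s/(c+1)) with ht
  have ht0 : 0 < t := lt_min hT hts
  have h1 := h t ht0 (min_le_left _ _)
  have h2 : t ≤ -s/(c+1) := min_le_right _ _
  have h3 : t*(c+1) ≤ -s := by
    rw [div_eq_mul_inv] at h2
    calc t*(c+1) ≤ (-s * (c+1)⁻¹)*(c+1) := by nlinarith
    _ = -s := by field_simp
  nlinarith [mul_pos ht0 ht0, mul_le_mul_of_nonneg_left h3 ht0.le]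

private lemma lower_nonpos {d : ℕ} (y x : Fin d → ℝ) (hx : Monotone x)
    (hmin : ∀ v : Fin d → ℝ, Monotone v → ∑ i, (x i - y i)^2 ≤ ∑ i, (v i - y i)^2)
    (S : Finset (Fin d)) (hS : ∀ ⦃a b : Fin d⦄, a ∈ S → b ≤ a → b ∈ S) :
    ∑ k ∈ S, (x k - y k) ≤ 0 := by
  have key : ∀ t : ℝ, 0 < t → t ≤ 1 → 0 ≤ 2*t*(-∑ k ∈ S, (x k - y k)) + t^2 * S.card := by
    intro t ht _
    have hm : Monotone fun k => x k + if k ∈ S then -t else 0 := by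
      intro a b hab
      by_cases ha : a ∈ S <;> by_cases hb : b ∈ S
      · simp only [if_pos ha, if_pos hb]; linarith [hx hab]
      · simp only [if_pos ha, if_neg hb]; linarith [hx hab]
      · exact absurd (hS hb hab) ha
      · simp only [if_neg ha, if_neg hb]; linarith [hx hab]
    have := pert_ineq y x hmin S (-t) hm
    nlinarith [this]
  have := pos_of_aux _ _ 1 (by positivity) one_pos key
  linarith

private lemma upper_nonneg {d : ℕ} (y x : Fin d → ℝ) (hx : Monotone x)
    (hmin : ∀ v : Fin d → ℝ, Monotone v → ∑ i, (x i - y i)^2 ≤ ∑ i, (v i - y i)^2)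
    (S : Finset (Fin d)) (hS : ∀ ⦃a b : Fin d⦄, a ∈ S → a ≤ b → b ∈ S) :
    0 ≤ ∑ k ∈ S, (x k - y k) := by
  have key : ∀ t : ℝ, 0 < t → t ≤ 1 → 0 ≤ 2*t*(∑ k ∈ S, (x k - y k)) + t^2 * S.card := by
    intro t ht _
    have hm : Monotone fun k => x k + if k ∈ S then t else 0 := by
      intro a b hab
      by_cases ha : a ∈ S <;> by_cases hb : b ∈ S
      · simp only [if_pos ha, if_pos hb]; linarith [hx hab]
      · exact absurd (hS ha hab) hb
      · simp only [if_neg ha, if_pos hb]; linarith [hx hab]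
      · simp only [if_neg ha, if_neg hb]; linarith [hx hab]
    exact pert_ineq y x hmin S t hm
  exact pos_of_aux _ _ 1 (by positivity) one_pos key

private lemma prefix_nonneg {d : ℕ} (y x : Fin d → ℝ) (hx : Monotone x)
    (hmin : ∀ v : Fin d → ℝ, Monotone v → ∑ i, (x i - y i)^2 ≤ ∑ i, (v i - y i)^2)
    (m : Fin d) (hm : (m:ℕ)+1 < d) (hlt : x m < x ⟨(m:ℕ)+1, hm⟩) :
    0 ≤ ∑ k ∈ Finset.Iic m, (x k - y k) := by
  apply pos_of_aux _ ((Finset.Iic m).card : ℝ) (x ⟨(m:ℕ)+1, hm⟩ - x m) (by positivity)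
    (by linarith)
  intro t ht0 htT
  apply pert_ineq y x hmin
  intro a b hab
  by_cases ha : a ∈ Finset.Iic m <;> by_cases hb : b ∈ Finset.Iic m
  · simp only [if_pos ha, if_pos hb]; linarith [hx hab]
  · simp only [if_pos ha, if_neg hb]
    have h1 : x a ≤ x m := hx (Finset.mem_Iic.1 ha)
    have h2 : x ⟨(m:ℕ)+1, hm⟩ ≤ x b := by
      apply hx
      simp only [Finset.mem_Iic, not_le] at hb
      rw [Fin.le_def, Fin.lt_def] at *
      simp only []
      omega
    linarith
  · exact absurd (Finset.mem_Iic.2 (le_trans hab (Finset.mem_Iic.1 hb))) ha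
  · simp only [if_neg ha, if_neg hb]; linarith [hx hab]

private lemma prefix_eq_zero {d : ℕ} (y x : Fin d → ℝ) (hx : Monotone x)
    (hmin : ∀ v : Fin d → ℝ, Monotone v → ∑ i, (x i - y i)^2 ≤ ∑ i, (v i - y i)^2)
    (m : Fin d) (hm : (m:ℕ)+1 < d) (hlt : x m < x ⟨(m:ℕ)+1, hm⟩) :
    ∑ k ∈ Finset.Iic m, (x k - y k) = 0 :=
  le_antisymm
    (lower_nonpos y x hx hmin _ (fun a b ha hba => Finset.mem_Iic.2
      (le_trans hba (Finset.mem_Iic.1 ha))))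
    (prefix_nonneg y x hx hmin m hm hlt)

private lemma sum_Icc_split {d : ℕ} (f : Fin d → ℝ) (a b : Fin d) (hab : a ≤ b) :
    (∑ k ∈ Finset.Icc a b, f k)
      = (∑ k ∈ Finset.Iic b, f k) - ∑ k ∈ Finset.Iio a, f k := by
  have hu : Finset.Iio a ∪ Finset.Icc a b = Finset.Iic b := by
    ext k
    simp only [Finset.mem_union, Finset.mem_Iio, Finset.mem_Icc, Finset.mem_Iic]
    constructor
    · rintro (h | ⟨_, h⟩)
      · exact le_trans h.le hab
      · exact h
    · intro h
      by_cases hk : k < a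
      · exact Or.inl hk
      · exact Or.inr ⟨not_lt.1 hk, h⟩
  have hdisj : Disjoint (Finset.Iio a) (Finset.Icc a b) := by
    rw [Finset.disjoint_left]
    intro k hk hk2
    rw [Finset.mem_Iio] at hk
    rw [Finset.mem_Icc] at hk2
    exact absurd hk2.1 (not_le.2 hk)
  have := Finset.sum_union hdisj (f := f)
  rw [hu] at this
  linarith

theorem stmt14 {d : ℕ} (y x : Fin d → ℝ) (hx : Monotone x)
    (hmin : ∀ v : Fin d → ℝ, Monotone v →
      ∑ i, (x i - y i)^2 ≤ ∑ i, (v i - y i)^2)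
    (i : Fin d) (hi : (i : ℕ) + 1 < d) :
    x i = x ⟨(i : ℕ) + 1, hi⟩ ↔
      (Finset.Iic i).sup' ⟨i, Finset.mem_Iic.2 le_rfl⟩
          (fun j => (∑ k ∈ Finset.Icc j i, y k) / ((Finset.Icc j i).card : ℝ)) ≥
      (Finset.Ici (⟨(i : ℕ) + 1, hi⟩ : Fin d)).inf'
          ⟨⟨(i : ℕ) + 1, hi⟩, Finset.mem_Ici.2 le_rfl⟩
          (fun j => (∑ k ∈ Finset.Icc (⟨(i : ℕ) + 1, hi⟩ : Fin d) j, y k) /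
            ((Finset.Icc (⟨(i : ℕ) + 1, hi⟩ : Fin d) j).card : ℝ)) := by
  classical
  set i1 : Fin d := ⟨(i : ℕ) + 1, hi⟩ with hi1def
  have hii1 : i < i1 := by rw [Fin.lt_def]; simp [hi1def]
  have hIio1 : Finset.Iio i1 = Finset.Iic i := by
    ext k
    simp only [Finset.mem_Iio, Finset.mem_Iic, Fin.lt_def, Fin.le_def, hi1def]
    omega
  have htotal : ∑ k ∈ Finset.univ, (x k - y k) = 0 :=
    le_antisymm
      (lower_nonpos y x hx hmin _ (fun a b _ _ => Finset.mem_univ b))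
      (upper_nonneg y x hx hmin _ (fun a b _ _ => Finset.mem_univ b))
  have hIic_nonpos : ∀ m : Fin d, ∑ k ∈ Finset.Iic m, (x k - y k) ≤ 0 := fun m =>
    lower_nonpos y x hx hmin _ (fun a b ha hba => Finset.mem_Iic.2
      (le_trans hba (Finset.mem_Iic.1 ha)))
  have hIio_nonpos : ∀ m : Fin d, ∑ k ∈ Finset.Iio m, (x k - y k) ≤ 0 := fun m =>
    lower_nonpos y x hx hmin _ (fun a b ha hba => Finset.mem_Iio.2
      (lt_of_le_of_lt hba (Finset.mem_Iio.1 ha)))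
  constructor
  · -- forward direction
    intro heq
    -- construct p
    set P := (Finset.Iic i).filter (fun k => x k = x i) with hP
    have hPne : P.Nonempty := ⟨i, by simp [hP]⟩
    set p := P.min' hPne with hp
    have hpmem := P.min'_mem hPne
    have hpi : p ≤ i := Finset.mem_Iic.1 (Finset.mem_filter.1 hpmem).1
    have hpx : x p = x i := (Finset.mem_filter.1 hpmem).2
    have hIiop : ∑ k ∈ Finset.Iio p, (x k - y k) = 0 := by
      rcases Nat.eq_zero_or_pos p.1 with h0 | h0
      · have he : Finset.Iio p = ∅ := by
          ext k; simp only [Finset.mem_Iio, Fin.lt_def, h0, Finset.notMem_empty, iff_false]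
          omega
        simp [he]
      · have hp'lt : p.1 - 1 < d := by omega
        set p' : Fin d := ⟨p.1 - 1, hp'lt⟩ with hp'
        have hp'm : (p' : ℕ) + 1 < d := by simp only [hp']; omega
        have hmk : (⟨(p' : ℕ) + 1, hp'm⟩ : Fin d) = p := by
          apply Fin.ext; simp only [hp']; omega
        have hp'p : p' ≤ p := by rw [Fin.le_def]; simp only [hp']; omega
        have hp'i : p' ≤ i := le_trans hp'p hpi
        have hlt : x p' < x p := by
          rcases lt_or_eq_of_le (hx hp'p) with h | h
          · exact h
          · exfalso
            have hmem : p' ∈ P := Finset.mem_filter.2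
              ⟨Finset.mem_Iic.2 hp'i, by rw [h, hpx]⟩
            have := P.min'_le p' hmem
            rw [← hp] at this
            have : (p:ℕ) ≤ p.1 - 1 := this
            omega
        have hz := prefix_eq_zero y x hx hmin p' hp'm (by rw [hmk]; exact hlt)
        have hEq : Finset.Iio p = Finset.Iic p' := by
          ext k
          simp only [Finset.mem_Iio, Finset.mem_Iic, Fin.lt_def, Fin.le_def, hp']
          omega
        rw [hEq]; exact hz
    -- construct q
    set Q := (Finset.Ici i1).filter (fun k => x k = x i1) with hQ
    have hQne : Q.Nonempty := ⟨i1, by simp [hQ]⟩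
    set q := Q.max' hQne with hq
    have hqmem := Q.max'_mem hQne
    have hqi : i1 ≤ q := Finset.mem_Ici.1 (Finset.mem_filter.1 hqmem).1
    have hqx : x q = x i1 := (Finset.mem_filter.1 hqmem).2
    have hIicq : ∑ k ∈ Finset.Iic q, (x k - y k) = 0 := by
      rcases eq_or_lt_of_le (Nat.succ_le_of_lt q.isLt) with h0 | h0
      · have he : Finset.Iic q = Finset.univ := by
          ext k
          simp only [Finset.mem_Iic, Finset.mem_univ, iff_true, Fin.le_def]
          omega
        rw [he]; exact htotal
      · set q' : Fin d := ⟨q.1 + 1, h0⟩ with hq'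
        have hqq' : q ≤ q' := by rw [Fin.le_def]; simp only [hq']; omega
        have hlt : x q < x q' := by
          rcases lt_or_eq_of_le (hx hqq') with h | h
          · exact h
          · exfalso
            have hmem : q' ∈ Q := Finset.mem_filter.2
              ⟨Finset.mem_Ici.2 (le_trans hqi hqq'), by rw [← h, hqx]⟩
            have := Q.le_max' q' hmem
            rw [← hq] at this
            rw [Fin.le_def] at this
            simp only [hq'] at this
            omega
        exact prefix_eq_zero y x hx hmin q h0 hlt
    -- average over [p, i] is ≥ x i
    have hcard1 : (0:ℝ) < ((Finset.Icc p i).card : ℝ) := by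
      have : i ∈ Finset.Icc p i := Finset.mem_Icc.2 ⟨hpi, le_rfl⟩
      exact_mod_cast Finset.card_pos.2 ⟨i, this⟩
    have hxsum1 : ∑ k ∈ Finset.Icc p i, x k = ((Finset.Icc p i).card : ℝ) * x i := by
      rw [Finset.sum_congr rfl (fun k hk => ?_), Finset.sum_const, nsmul_eq_mul]
      have hk' := Finset.mem_Icc.1 hk
      have h1 : x p ≤ x k := hx hk'.1
      have h2 : x k ≤ x i := hx hk'.2
      linarith [hpx]
    have hgsum1 : ∑ k ∈ Finset.Icc p i, (x k - y k) ≤ 0 := by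
      rw [sum_Icc_split _ _ _ hpi, hIiop]
      simpa using hIic_nonpos i
    have havg1 : x i ≤ (∑ k ∈ Finset.Icc p i, y k) / ((Finset.Icc p i).card : ℝ) := by
      rw [le_div_iff₀ hcard1]
      have hsub : ∑ k ∈ Finset.Icc p i, (x k - y k)
          = (∑ k ∈ Finset.Icc p i, x k) - ∑ k ∈ Finset.Icc p i, y k :=
        Finset.sum_sub_distrib _ _
      nlinarith [hgsum1, hxsum1]
    -- average over [i1, q] is ≤ x i1 = x i
    have hcard2 : (0:ℝ) < ((Finset.Icc i1 q).card : ℝ) := by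
      have : i1 ∈ Finset.Icc i1 q := Finset.mem_Icc.2 ⟨le_rfl, hqi⟩
      exact_mod_cast Finset.card_pos.2 ⟨i1, this⟩
    have hxsum2 : ∑ k ∈ Finset.Icc i1 q, x k = ((Finset.Icc i1 q).card : ℝ) * x i1 := by
      rw [Finset.sum_congr rfl (fun k hk => ?_), Finset.sum_const, nsmul_eq_mul]
      have hk' := Finset.mem_Icc.1 hk
      have h1 : x i1 ≤ x k := hx hk'.1
      have h2 : x k ≤ x q := hx hk'.2
      linarith [hqx]
    have hgsum2 : 0 ≤ ∑ k ∈ Finset.Icc i1 q, (x k - y k) := by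
      rw [sum_Icc_split _ _ _ hqi, hIicq, hIio1]
      simpa using hIic_nonpos i
    have havg2 : (∑ k ∈ Finset.Icc i1 q, y k) / ((Finset.Icc i1 q).card : ℝ) ≤ x i1 := by
      rw [div_le_iff₀ hcard2]
      have hsub : ∑ k ∈ Finset.Icc i1 q, (x k - y k)
          = (∑ k ∈ Finset.Icc i1 q, x k) - ∑ k ∈ Finset.Icc i1 q, y k :=
        Finset.sum_sub_distrib _ _
      nlinarith [hgsum2, hxsum2]
    have hsup := Finset.le_sup'
      (fun j => (∑ k ∈ Finset.Icc j i, y k) / ((Finset.Icc j i).card : ℝ))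
      (Finset.mem_Iic.2 hpi)
    have hinf := Finset.inf'_le
      (fun j => (∑ k ∈ Finset.Icc i1 j, y k) / ((Finset.Icc i1 j).card : ℝ))
      (Finset.mem_Ici.2 hqi)
    calc (Finset.Ici i1).inf' ⟨i1, Finset.mem_Ici.2 le_rfl⟩
          (fun j => (∑ k ∈ Finset.Icc i1 j, y k) / ((Finset.Icc i1 j).card : ℝ))
        ≤ (∑ k ∈ Finset.Icc i1 q, y k) / ((Finset.Icc i1 q).card : ℝ) := hinf
      _ ≤ x i1 := havg2
      _ = x i := heq.symm
      _ ≤ (∑ k ∈ Finset.Icc p i, y k) / ((Finset.Icc p i).card : ℝ) := havg1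
      _ ≤ (Finset.Iic i).sup' ⟨i, Finset.mem_Iic.2 le_rfl⟩
          (fun j => (∑ k ∈ Finset.Icc j i, y k) / ((Finset.Icc j i).card : ℝ)) := hsup
  · -- reverse direction
    intro hge
    by_contra hne
    have hlt : x i < x i1 := lt_of_le_of_ne (hx hii1.le) hne
    have hIici : ∑ k ∈ Finset.Iic i, (x k - y k) = 0 :=
      prefix_eq_zero y x hx hmin i hi hlt
    have hsup_le : (Finset.Iic i).sup' ⟨i, Finset.mem_Iic.2 le_rfl⟩
        (fun j => (∑ k ∈ Finset.Icc j i, y k) / ((Finset.Icc j i).card : ℝ)) ≤ x i := by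
      apply Finset.sup'_le
      intro j hj
      have hji : j ≤ i := Finset.mem_Iic.1 hj
      have hcard : (0:ℝ) < ((Finset.Icc j i).card : ℝ) := by
        have : i ∈ Finset.Icc j i := Finset.mem_Icc.2 ⟨hji, le_rfl⟩
        exact_mod_cast Finset.card_pos.2 ⟨i, this⟩
      have hxsum : ∑ k ∈ Finset.Icc j i, x k ≤ ((Finset.Icc j i).card : ℝ) * x i := by
        calc ∑ k ∈ Finset.Icc j i, x k ≤ ∑ k ∈ Finset.Icc j i, x i :=
              Finset.sum_le_sum (fun k hk => hx (Finset.mem_Icc.1 hk).2)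
          _ = ((Finset.Icc j i).card : ℝ) * x i := by
              rw [Finset.sum_const, nsmul_eq_mul]
      have hgsum : 0 ≤ ∑ k ∈ Finset.Icc j i, (x k - y k) := by
        rw [sum_Icc_split _ _ _ hji, hIici]
        linarith [hIio_nonpos j]
      have hsub : ∑ k ∈ Finset.Icc j i, (x k - y k)
          = (∑ k ∈ Finset.Icc j i, x k) - ∑ k ∈ Finset.Icc j i, y k :=
        Finset.sum_sub_distrib _ _
      rw [div_le_iff₀ hcard]
      nlinarith
    have hinf_ge : x i1 ≤ (Finset.Ici i1).inf' ⟨i1, Finset.mem_Ici.2 le_rfl⟩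
        (fun j => (∑ k ∈ Finset.Icc i1 j, y k) / ((Finset.Icc i1 j).card : ℝ)) := by
      apply Finset.le_inf'
      intro j hj
      have hij : i1 ≤ j := Finset.mem_Ici.1 hj
      have hcard : (0:ℝ) < ((Finset.Icc i1 j).card : ℝ) := by
        have : i1 ∈ Finset.Icc i1 j := Finset.mem_Icc.2 ⟨le_rfl, hij⟩
        exact_mod_cast Finset.card_pos.2 ⟨i1, this⟩
      have hxsum : ((Finset.Icc i1 j).card : ℝ) * x i1 ≤ ∑ k ∈ Finset.Icc i1 j, x k := by
        calc ((Finset.Icc i1 j).card : ℝ) * x i1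
            = ∑ k ∈ Finset.Icc i1 j, x i1 := by rw [Finset.sum_const, nsmul_eq_mul]
          _ ≤ ∑ k ∈ Finset.Icc i1 j, x k :=
              Finset.sum_le_sum (fun k hk => hx (Finset.mem_Icc.1 hk).1)
      have hgsum : ∑ k ∈ Finset.Icc i1 j, (x k - y k) ≤ 0 := by
        rw [sum_Icc_split _ _ _ hij, hIio1, hIici]
        linarith [hIic_nonpos j]
      have hsub : ∑ k ∈ Finset.Icc i1 j, (x k - y k)
          = (∑ k ∈ Finset.Icc i1 j, x k) - ∑ k ∈ Finset.Icc i1 j, y k :=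
        Finset.sum_sub_distrib _ _
      rw [le_div_iff₀ hcard]
      nlinarith
    have : x i1 ≤ x i := le_trans hinf_ge (le_trans hge hsup_le)
    linarith
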